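/- arXiv:1007.4004 — 2 statements merged into one kernel-verified Lean document; each statement's English description precedes it below -/
import Mathlib

section
/- Let $O$ be the ring of integers of a nonarchimedean local field and $\mathfrak{m}$ its maximal ideal. Let $G$ be a topologically finitely generated profinite group and let $K_n \subset G$ be the intersection of the kernels of all continuous homomorphisms $G \to GL(r, O/\mathfrak{m}^n)$. If $\bigcap_n K_n = \{1\}$, then $G$ embeds as a closed subgroup of a (possibly infinite) product of the finite groups $GL(r, O/\mathfrak{m}^n)$, and in particular $G$ has an open pro-$\ell$ subgroup, where $\ell$ is the residue characteristic of $O$. -/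
/-- A closed subgroup `H` of a topological group is *pro-`ℓ`* if every open normal
subgroup of `H` has index a power of `ℓ`. -/
def IsProL {G : Type*} [Group G] [TopologicalSpace G] (ℓ : ℕ) (H : Subgroup G) : Prop :=
  ∀ U : Subgroup H, IsOpen (U : Set H) → U.Normal → ∃ k : ℕ, U.index = ℓ ^ k

/-- The finite groups `GL(r, O/𝔪ⁿ)` carry the discrete topology. -/
instance glDiscrete (O : Type*) [CommRing O] [IsLocalRing O] (r n : ℕ) :
    TopologicalSpace
      (Matrix.GeneralLinearGroup (Fin r) (O ⧸ (IsLocalRing.maximalIdeal O ^ n))) := ⊥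

section MatrixIdeal
variable {R : Type*} [CommRing R] {r : ℕ} {J : Ideal R}

private lemma entries_mul {a b : ℕ} {A B : Matrix (Fin r) (Fin r) R}
    (hA : ∀ p q, A p q ∈ J ^ a) (hB : ∀ p q, B p q ∈ J ^ b) :
    ∀ p q, (A * B) p q ∈ J ^ (a + b) := by
  intro p q
  rw [Matrix.mul_apply, pow_add]
  exact Submodule.sum_mem _ fun k _ => Ideal.mul_mem_mul (hA p k) (hB k q)

private lemma entries_pow {a : ℕ} {A : Matrix (Fin r) (Fin r) R}
    (hA : ∀ p q, A p q ∈ J ^ a) : ∀ t, ∀ p q, (A ^ (t + 1)) p q ∈ J ^ (a * (t + 1)) := by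
  intro t
  induction t with
  | zero => simpa using hA
  | succ t ih =>
      intro p q
      have h2 := entries_mul ih hA p q
      rw [← pow_succ] at h2
      have he : a * (t + 1 + 1) = a * (t + 1) + a := by ring
      rw [he]
      exact h2

private lemma entries_step {ℓ j : ℕ} (hℓ : 2 ≤ ℓ) (hl : (ℓ : R) ∈ J) (hj : 1 ≤ j)
    {A : Matrix (Fin r) (Fin r) R} (hA : ∀ p q, A p q ∈ J ^ j) :
    ∀ p q, ((1 + A) ^ ℓ - 1) p q ∈ J ^ (j + 1) := by
  intro p q
  have hexp := (Commute.one_left A).add_pow ℓ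
  rw [Finset.sum_range_succ] at hexp
  simp only [Nat.sub_self, pow_zero, Nat.choose_self, Nat.cast_one, mul_one, one_pow, one_mul]
    at hexp
  have hsub : (1 + A) ^ ℓ - 1 = ∑ m ∈ Finset.range ℓ, A ^ (ℓ - m) * (ℓ.choose m : Matrix (Fin r) (Fin r) R) := by
    rw [hexp, add_sub_cancel_right]
  rw [hsub, Matrix.sum_apply]
  refine Submodule.sum_mem _ fun m hm => ?_
  have hmlt : m < ℓ := Finset.mem_range.mp hm
  -- rewrite term as nat-scalar action
  have hterm : A ^ (ℓ - m) * (ℓ.choose m : Matrix (Fin r) (Fin r) R) = (ℓ.choose m) • A ^ (ℓ - m) := by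
    rw [nsmul_eq_mul]
    exact ((Nat.cast_commute _ _).eq).symm
  rw [hterm, Matrix.smul_apply, nsmul_eq_mul]
  -- cases on whether ℓ - m = 1
  rcases Nat.lt_or_ge m (ℓ - 1) with hc | hc
  · -- ℓ - m ≥ 2
    obtain ⟨t, ht⟩ : ∃ t, ℓ - m = t + 2 := ⟨ℓ - m - 2, by omega⟩
    have hpow := entries_pow hA (t + 1) p q
    rw [show t + 1 + 1 = t + 2 from rfl, ← ht] at hpow
    have h2 : 2 ≤ ℓ - m := by omega
    have hle : J ^ (j * (ℓ - m)) ≤ J ^ (j + 1) := Ideal.pow_le_pow_right (by nlinarith)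
    exact Ideal.mul_mem_left _ _ (hle hpow)
  · -- m = ℓ - 1, choose = ℓ
    have hm1 : m = ℓ - 1 := by omega
    have hch : ℓ.choose m = ℓ := by
      have h1 := Nat.choose_symm (show 1 ≤ ℓ by omega)
      rw [Nat.choose_one_right] at h1
      rw [hm1, h1]
    have hA1 : (A ^ (ℓ - m)) p q ∈ J ^ j := by
      rw [show ℓ - m = 1 by omega, pow_one]; exact hA p q
    rw [hch]
    have := Ideal.mul_mem_mul hl hA1
    rwa [← pow_succ'] at this


private lemma entries_iter {ℓ : ℕ} (hℓ : 2 ≤ ℓ) (hl : (ℓ : R) ∈ J)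
    {A : Matrix (Fin r) (Fin r) R} (hA : ∀ p q, A p q ∈ J ^ 1) :
    ∀ m, ∀ p q, ((1 + A) ^ ℓ ^ m - 1) p q ∈ J ^ (m + 1) := by
  intro m
  induction m with
  | zero => simpa using hA
  | succ m ih =>
      have key := entries_step hℓ hl (Nat.succ_le_succ (Nat.zero_le m))
        (A := (1 + A) ^ ℓ ^ m - 1) ih
      intro p q
      have h2 := key p q
      rw [show (1 : Matrix (Fin r) (Fin r) R) + ((1 + A) ^ ℓ ^ m - 1) = (1 + A) ^ ℓ ^ m by abel,
        ← pow_mul, ← pow_succ] at h2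
      exact h2

private lemma units_pow_eq_one {ℓ n : ℕ} (hℓ : 2 ≤ ℓ) (hJn : J ^ n = ⊥) (hl : (ℓ : R) ∈ J)
    (x : (Matrix (Fin r) (Fin r) R)ˣ)
    (hx : ∀ p q, (((x : Matrix (Fin r) (Fin r) R)) - 1) p q ∈ J) :
    ∃ k, x ^ ℓ ^ k = 1 := by
  rcases n with _ | n
  · -- R is the zero ring
    have h0 : (1 : R) = 0 := by
      have h1 : (1 : R) ∈ J ^ 0 := by simp
      rw [hJn] at h1
      simpa using h1
    haveI : Subsingleton R := subsingleton_of_zero_eq_one h0.symm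
    exact ⟨0, Units.ext (Subsingleton.elim _ _)⟩
  · refine ⟨n, ?_⟩
    have hA : ∀ p q, (((x : Matrix (Fin r) (Fin r) R)) - 1) p q ∈ J ^ 1 := by simpa using hx
    have h := entries_iter hℓ hl hA n
    have hbot : ∀ p q, ((1 + ((x : Matrix (Fin r) (Fin r) R) - 1)) ^ ℓ ^ n - 1) p q
        ∈ (⊥ : Ideal R) := fun p q => hJn ▸ h p q
    have hval : ((x : Matrix (Fin r) (Fin r) R)) ^ ℓ ^ n = 1 := by
      have he : (1 : Matrix (Fin r) (Fin r) R) + ((x : Matrix (Fin r) (Fin r) R) - 1)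
          = (x : Matrix (Fin r) (Fin r) R) := by abel
      rw [he] at hbot
      have : ((x : Matrix (Fin r) (Fin r) R)) ^ ℓ ^ n - 1 = 0 :=
        Matrix.ext fun p q => by simpa using Ideal.mem_bot.mp (hbot p q)
      exact sub_eq_zero.mp this
    exact Units.ext (by rw [Units.val_pow_eq_pow_val, hval, Units.val_one])

end MatrixIdeal

section LocalKey
open IsLocalRing
variable (O : Type*) [CommRing O] [IsLocalRing O]

private lemma key_local {ℓ r : ℕ} (hℓ2 : 2 ≤ ℓ) [CharP (ResidueField O) ℓ] {n : ℕ} (hn : 1 ≤ n)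
    (x : Matrix.GeneralLinearGroup (Fin r) (O ⧸ (maximalIdeal O ^ n)))
    (hx : Units.map (RingHom.toMonoidHom (RingHom.mapMatrix
      (Ideal.Quotient.factor (S := maximalIdeal O ^ n) (T := maximalIdeal O ^ 1)
        (Ideal.pow_le_pow_right hn)))) x = 1) :
    ∃ k, x ^ ℓ ^ k = 1 := by
  set R := O ⧸ (maximalIdeal O ^ n)
  set J : Ideal R := (maximalIdeal O).map (Ideal.Quotient.mk (maximalIdeal O ^ n)) with hJ
  have hJn : J ^ n = ⊥ := by
    rw [hJ, ← Ideal.map_pow, Ideal.map_quotient_self]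
  have hlO : (ℓ : O) ∈ maximalIdeal O := by
    have h1 : (ℓ : ResidueField O) = 0 := CharP.cast_eq_zero _ ℓ
    have h2 : residue O (ℓ : O) = 0 := by rw [map_natCast]; exact h1
    exact Ideal.Quotient.eq_zero_iff_mem.mp h2
  have hl : (ℓ : R) ∈ J := by
    have : (ℓ : R) = Ideal.Quotient.mk (maximalIdeal O ^ n) (ℓ : O) := by rw [map_natCast]
    rw [this]
    exact Ideal.mem_map_of_mem _ hlO
  set π := Ideal.Quotient.factor (S := maximalIdeal O ^ n) (T := maximalIdeal O ^ 1)
    (Ideal.pow_le_pow_right hn) with hπ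
  have hker : ∀ y : R, π y = 0 → y ∈ J := by
    intro y hy
    obtain ⟨a, rfl⟩ := Ideal.Quotient.mk_surjective y
    rw [Ideal.Quotient.factor_mk, Ideal.Quotient.eq_zero_iff_mem, pow_one] at hy
    exact Ideal.mem_map_of_mem _ hy
  have hmap : (RingHom.mapMatrix π) ((x : Matrix (Fin r) (Fin r) R)) = 1 := by
    have := congrArg Units.val hx
    rwa [Units.coe_map, Units.val_one] at this
  have hx' : ∀ p q, (((x : Matrix (Fin r) (Fin r) R)) - 1) p q ∈ J := by
    intro p q
    apply hker
    have h0 : (RingHom.mapMatrix π) (((x : Matrix (Fin r) (Fin r) R)) - 1) = 0 := by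
      rw [map_sub, hmap, map_one, sub_self]
    calc π ((((x : Matrix (Fin r) (Fin r) R)) - 1) p q)
        = ((RingHom.mapMatrix π) (((x : Matrix (Fin r) (Fin r) R)) - 1)) p q := rfl
      _ = 0 := by rw [h0]; rfl
  exact units_pow_eq_one hℓ2 hJn hl x hx'

end LocalKey

section Instances
variable (O : Type*) [CommRing O] [IsLocalRing O] (r n : ℕ)

instance glDiscrete' : DiscreteTopology
    (Matrix.GeneralLinearGroup (Fin r) (O ⧸ (IsLocalRing.maximalIdeal O ^ n))) := ⟨rfl⟩


instance quotFinite [Finite (IsLocalRing.ResidueField O)] :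
    Finite (O ⧸ (IsLocalRing.maximalIdeal O ^ 1)) := by
  have e : (O ⧸ (IsLocalRing.maximalIdeal O ^ 1)) ≃+* IsLocalRing.ResidueField O :=
    Ideal.quotEquivOfEq (pow_one _)
  exact Finite.of_equiv _ e.symm.toEquiv

example [Finite (IsLocalRing.ResidueField O)] :
    Finite (Matrix.GeneralLinearGroup (Fin r) (O ⧸ (IsLocalRing.maximalIdeal O ^ 1))) :=
  inferInstance

end Instances

open IsLocalRing in
private theorem prol {ℓ : ℕ} (hℓ : ℓ.Prime)
    (O : Type*) [CommRing O] [IsLocalRing O]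
    [CharP (ResidueField O) ℓ]
    (G : Type*) [Group G] [TopologicalSpace G] [IsTopologicalGroup G]
    [CompactSpace G] [T2Space G] (r : ℕ)
    (htriv : (⨅ n : ℕ, ⨅ f : {f : G →*
        Matrix.GeneralLinearGroup (Fin r) (O ⧸ (maximalIdeal O ^ n)) //
          Continuous f}, (f.1).ker) = ⊥)
    (H : Subgroup G) (hHopen : IsOpen (H : Set G))
    (hHsub : ∀ g ∈ H, ∀ f : {f : G →* Matrix.GeneralLinearGroup (Fin r)
        (O ⧸ (maximalIdeal O ^ 1)) // Continuous f}, f.1 g = 1) :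
    ∀ U : Subgroup H, IsOpen (U : Set H) → U.Normal → ∃ k : ℕ, U.index = ℓ ^ k := by
  classical
  intro U hU _
  haveI : Nonempty (Σ n : ℕ, {f : G →* Matrix.GeneralLinearGroup (Fin r)
      (O ⧸ (maximalIdeal O ^ n)) // Continuous f}) :=
    ⟨⟨0, ⟨1, continuous_const⟩⟩⟩
  obtain ⟨W, hWopen, hWU⟩ := isOpen_induced_iff.mp hU
  have hker_closed : ∀ i : (Σ n : ℕ, {f : G →* Matrix.GeneralLinearGroup (Fin r)
      (O ⧸ (maximalIdeal O ^ n)) // Continuous f}), IsClosed ((i.2.1.ker : Subgroup G) : Set G) := by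
    intro i
    have : ((i.2.1.ker : Subgroup G) : Set G) = i.2.1 ⁻¹' {1} := by
      ext x; simp [MonoidHom.mem_ker]
    rw [this]
    exact IsClosed.preimage i.2.2 (isClosed_discrete _)
  have hempty : Wᶜ ∩ ⋂ i : (Σ n : ℕ, {f : G →* Matrix.GeneralLinearGroup (Fin r)
      (O ⧸ (maximalIdeal O ^ n)) // Continuous f}), ((i.2.1.ker : Subgroup G) : Set G) = ∅ := by
    ext x
    simp only [Set.mem_inter_iff, Set.mem_compl_iff, Set.mem_iInter, Set.mem_empty_iff_false,
      iff_false, not_and]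
    intro hxW hxker
    have hx1 : x = 1 := by
      have : x ∈ (⊥ : Subgroup G) := by
        rw [← htriv]
        exact Subgroup.mem_iInf.mpr fun n => Subgroup.mem_iInf.mpr fun f => hxker ⟨n, f⟩
      simpa using this
    apply hxW
    rw [hx1]
    have h1U : (1 : ↥H) ∈ Subtype.val ⁻¹' W := by rw [hWU]; exact U.one_mem
    simpa using h1U
  obtain ⟨u, hu⟩ := (hWopen.isClosed_compl.isCompact).elim_finite_subfamily_closed _
    hker_closed hempty
  set N' : Subgroup G := ⨅ i ∈ u, i.2.1.ker with hN'
  have hN'mem : ∀ x : G, x ∈ N' ↔ ∀ i ∈ u, i.2.1 x = 1 := by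
    intro x
    simp [hN', Subgroup.mem_iInf, MonoidHom.mem_ker]
  have hN'W : (N' : Set G) ⊆ W := by
    intro x hx
    by_contra hxW
    have hxmem : x ∈ (Wᶜ ∩ ⋂ i ∈ u, ((i.2.1.ker : Subgroup G) : Set G)) := by
      refine ⟨hxW, ?_⟩
      simp only [Set.mem_iInter]
      intro i hi
      exact (hN'mem x).mp hx i hi
    rw [hu] at hxmem
    exact hxmem
  have hN'open : IsOpen (N' : Set G) := by
    have hcoe : (N' : Set G) = ⋂ i ∈ u, ((i.2.1.ker : Subgroup G) : Set G) := by
      ext x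
      simp only [Set.mem_iInter, SetLike.mem_coe]
      rw [hN'mem]
      simp [MonoidHom.mem_ker]
    rw [hcoe]
    refine (u.finite_toSet).isOpen_biInter fun i _ => ?_
    have : ((i.2.1.ker : Subgroup G) : Set G) = i.2.1 ⁻¹' {1} := by
      ext x; simp [MonoidHom.mem_ker]
    rw [this]
    exact i.2.2.isOpen_preimage _ (isOpen_discrete _)
  have hN'normal : N'.Normal := by
    constructor
    intro n hn g
    rw [hN'mem] at hn ⊢
    intro i hi
    rw [map_mul, map_mul, hn i hi, mul_one, map_inv, mul_inv_cancel]
  set NH : Subgroup ↥H := N'.comap H.subtype with hNH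
  haveI hNHnormal : NH.Normal := hN'normal.comap _
  have hNHU : NH ≤ U := by
    intro h hh
    have hW : (h : G) ∈ W := hN'W hh
    have : h ∈ Subtype.val ⁻¹' W := hW
    rwa [hWU] at this
  have hNHopen : IsOpen (NH : Set ↥H) := by
    have : (NH : Set ↥H) = Subtype.val ⁻¹' (N' : Set G) := rfl
    rw [this]
    exact continuous_subtype_val.isOpen_preimage _ hN'open
  haveI : CompactSpace ↥H :=
    isCompact_iff_compactSpace.mp ((H.isClosed_of_isOpen hHopen).isCompact)
  haveI hfinq : Finite (↥H ⧸ NH) := Subgroup.quotient_finite_of_isOpen NH hNHopen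
  have hP : IsPGroup ℓ (↥H ⧸ NH) := by
    intro y
    obtain ⟨h, rfl⟩ := QuotientGroup.mk_surjective y
    have hchoice : ∀ i : (Σ n : ℕ, {f : G →* Matrix.GeneralLinearGroup (Fin r)
        (O ⧸ (maximalIdeal O ^ n)) // Continuous f}),
        ∃ k : ℕ, i ∈ u → (i.2.1 (h : G)) ^ ℓ ^ k = 1 := by
      intro i
      by_cases hi : i ∈ u
      · obtain ⟨n, f⟩ := i
        rcases n with _ | m
        · haveI : Subsingleton (O ⧸ (maximalIdeal O ^ 0)) :=
            Ideal.Quotient.subsingleton_iff.mpr (by rw [pow_zero, Ideal.one_eq_top])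
          exact ⟨0, fun _ => Units.ext (Subsingleton.elim _ _)⟩
        · set π := Ideal.Quotient.factor (S := maximalIdeal O ^ (m + 1)) (T := maximalIdeal O ^ 1)
            (Ideal.pow_le_pow_right (Nat.succ_le_succ (Nat.zero_le m))) with hπ
          set g : G →* Matrix.GeneralLinearGroup (Fin r) (O ⧸ (maximalIdeal O ^ 1)) :=
            (Units.map (RingHom.toMonoidHom (RingHom.mapMatrix π))).comp f.1 with hg
          have hredc : Continuous (⇑(Units.map (RingHom.toMonoidHom (RingHom.mapMatrix π))) :
              Matrix.GeneralLinearGroup (Fin r) (O ⧸ (maximalIdeal O ^ (m + 1))) → _) :=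
            continuous_of_discreteTopology
          have hgc : Continuous g := by
            rw [hg, MonoidHom.coe_comp]
            exact hredc.comp f.2
          have hg1 : g (h : G) = 1 := hHsub _ h.2 ⟨g, hgc⟩
          obtain ⟨k, hk⟩ := key_local O hℓ.two_le (Nat.succ_le_succ (Nat.zero_le m))
            (f.1 (h : G)) hg1
          exact ⟨k, fun _ => hk⟩
      · exact ⟨0, fun h' => absurd h' hi⟩
    choose k hk using hchoice
    refine ⟨u.sup k, ?_⟩
    have hmkpow : (QuotientGroup.mk h : ↥H ⧸ NH) ^ ℓ ^ u.sup k
        = QuotientGroup.mk (h ^ ℓ ^ u.sup k) := by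
      exact (map_pow (QuotientGroup.mk' NH) h (ℓ ^ u.sup k)).symm
    rw [hmkpow, QuotientGroup.eq_one_iff]
    refine Subgroup.mem_comap.mpr ?_
    rw [hN'mem]
    intro i hi
    have hKi : k i ≤ u.sup k := Finset.le_sup hi
    have hone : (i.2.1 (h : G)) ^ ℓ ^ u.sup k = 1 := by
      rw [← Nat.add_sub_cancel' hKi, pow_add, pow_mul, hk i hi, one_pow]
    have hcoe : (H.subtype (h ^ ℓ ^ u.sup k) : G) = (h : G) ^ ℓ ^ u.sup k := by
      simp
    rw [hcoe, map_pow, hone]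
  haveI : Fact ℓ.Prime := ⟨hℓ⟩
  obtain ⟨m, hm⟩ := IsPGroup.iff_card.mp hP
  have hidx : NH.index = ℓ ^ m := by
    rw [Subgroup.index_eq_card]
    exact hm
  have hdvd : U.index ∣ ℓ ^ m := hidx ▸ Subgroup.index_dvd_of_le hNHU
  obtain ⟨k', -, hk'⟩ := (Nat.dvd_prime_pow hℓ).mp hdvd
  exact ⟨k', hk'⟩

open IsLocalRing in
private theorem part2 {ℓ : ℕ} (hℓ : ℓ.Prime)
    (O : Type*) [CommRing O] [IsLocalRing O]
    [CharP (ResidueField O) ℓ] [Finite (ResidueField O)]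
    (G : Type*) [Group G] [TopologicalSpace G] [IsTopologicalGroup G]
    [CompactSpace G] [T2Space G]
    (hfg : ∃ S : Finset G, (Subgroup.closure (S : Set G)).topologicalClosure = ⊤)
    (r : ℕ)
    (htriv : (⨅ n : ℕ, ⨅ f : {f : G →*
        Matrix.GeneralLinearGroup (Fin r) (O ⧸ (maximalIdeal O ^ n)) //
          Continuous f}, (f.1).ker) = ⊥) :
    ∃ H : Subgroup G, IsOpen (H : Set G) ∧ (∀ U : Subgroup H, IsOpen (U : Set H) → U.Normal →
      ∃ k : ℕ, U.index = ℓ ^ k) := by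
  classical
  -- finiteness of the set of continuous homs to level 1
  have hfin : Finite {f : G →* Matrix.GeneralLinearGroup (Fin r)
      (O ⧸ (maximalIdeal O ^ 1)) // Continuous f} := by
    obtain ⟨S, hS⟩ := hfg
    have hdense : Dense ((Subgroup.closure (S : Set G) : Subgroup G) : Set G) := by
      rw [dense_iff_closure_eq]
      have := congrArg (fun H : Subgroup G => (H : Set G)) hS
      simpa using this
    apply Finite.of_injective (fun f => (fun s : (S : Set G) => f.1 s))
    intro f g hfg'
    apply Subtype.ext
    apply DFunLike.coe_injective
    apply Continuous.ext_on hdense f.2 g.2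
    intro x hx
    exact MonoidHom.eqOn_closure (fun s hs => congrFun hfg' ⟨s, hs⟩) hx
  have hopen : IsOpen ((⨅ f : {f : G →* Matrix.GeneralLinearGroup (Fin r)
      (O ⧸ (maximalIdeal O ^ 1)) // Continuous f}, f.1.ker : Subgroup G) : Set G) := by
    have : ((⨅ f : {f : G →* Matrix.GeneralLinearGroup (Fin r)
        (O ⧸ (maximalIdeal O ^ 1)) // Continuous f}, f.1.ker : Subgroup G) : Set G)
        = ⋂ f : {f : G →* Matrix.GeneralLinearGroup (Fin r)
        (O ⧸ (maximalIdeal O ^ 1)) // Continuous f}, (f.1.ker : Set G) := by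
      simp [Subgroup.coe_iInf]
    rw [this]
    exact isOpen_iInter_of_finite fun f => by
      have : (f.1.ker : Set G) = f.1 ⁻¹' {1} := by
        ext x; simp [MonoidHom.mem_ker]
      rw [this]
      exact f.2.isOpen_preimage _ (isOpen_discrete _)
  refine ⟨_, hopen, prol hℓ O G r htriv _ hopen ?_⟩
  intro g hg f
  exact Subgroup.mem_iInf.mp hg f

/-- **Embedding into a product of the groups `GL(r, O/𝔪ⁿ)`.**
Let `O` be the ring of integers of a nonarchimedean local field with maximal ideal `𝔪`
and residue characteristic `ℓ`.  Let `G` be a topologically finitely generated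
profinite group and `K n ⊆ G` the intersection of the kernels of all continuous
homomorphisms `G → GL(r, O/𝔪ⁿ)`.  If `⋂ₙ K n = {1}`, then `G` embeds as a closed
subgroup of a product of the finite groups `GL(r, O/𝔪ⁿ)` (via the tautological map),
and in particular `G` has an open pro-`ℓ` subgroup. -/
theorem stmt_12 (ℓ : ℕ) (hℓ : ℓ.Prime)
    (O : Type*) [CommRing O] [IsDomain O] [IsDiscreteValuationRing O]
    [CharP (IsLocalRing.ResidueField O) ℓ] [Finite (IsLocalRing.ResidueField O)]
    (G : Type*) [Group G] [TopologicalSpace G] [IsTopologicalGroup G]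
    [CompactSpace G] [T2Space G] [TotallyDisconnectedSpace G]
    (hfg : ∃ S : Finset G, (Subgroup.closure (S : Set G)).topologicalClosure = ⊤)
    (r : ℕ)
    (htriv : (⨅ n : ℕ, ⨅ f : {f : G →*
        Matrix.GeneralLinearGroup (Fin r) (O ⧸ (IsLocalRing.maximalIdeal O ^ n)) //
          Continuous f}, (f.1).ker) = ⊥) :
    Topology.IsClosedEmbedding
      (fun (g : G)
        (i : Σ n : ℕ, {f : G →*
          Matrix.GeneralLinearGroup (Fin r) (O ⧸ (IsLocalRing.maximalIdeal O ^ n)) //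
            Continuous f}) => i.2.1 g) ∧
    ∃ H : Subgroup G, IsOpen (H : Set G) ∧ IsProL ℓ H := by
  constructor
  · apply Continuous.isClosedEmbedding
    · exact continuous_pi fun i => i.2.2
    · intro g₁ g₂ hgg
      have hmem : g₁ * g₂⁻¹ ∈ (⊥ : Subgroup G) := by
        rw [← htriv]
        refine Subgroup.mem_iInf.mpr fun n => Subgroup.mem_iInf.mpr fun f => ?_
        have hfe := congrFun hgg ⟨n, f⟩
        simp only at hfe
        rw [MonoidHom.mem_ker, map_mul, map_inv, hfe, mul_inv_cancel]
      rw [Subgroup.mem_bot, mul_inv_eq_one] at hmem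
      exact hmem
  · obtain ⟨H, hHopen, hHprol⟩ := part2 hℓ O G hfg r htriv
    exact ⟨H, hHopen, hHprol⟩
end

section
/- Let $C$ be the union of all CM-subfields of $\overline{\mathbb{Q}}$ and $R$ the maximal totally real subfield of $\overline{\mathbb{Q}}$. Then for any totally positive element $d \in R$, one has $C = R(\sqrt{-d})$. -/
/-- The maximal totally real subfield `R ⊆ ℚ̄`: the set of elements all of whose
complex conjugates are real. -/
noncomputable def maxTotallyReal : Subfield (AlgebraicClosure ℚ) where
  carrier := {x | ∀ σ : AlgebraicClosure ℚ →+* ℂ, (σ x).im = 0}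
  mul_mem' := by
    intro a b ha hb σ
    simp [Complex.mul_im, ha σ, hb σ]
  one_mem' := by intro σ; simp
  add_mem' := by
    intro a b ha hb σ
    simp [ha σ, hb σ]
  zero_mem' := by intro σ; simp
  neg_mem' := by
    intro a ha σ
    simp [ha σ]
  inv_mem' := by
    intro a ha σ
    simp [Complex.inv_im, ha σ]

/-- A subfield `K ⊆ ℚ̄` is a CM-field if it is finite over `ℚ`, totally imaginary,
and a quadratic extension `K = k⁺(α)`, `α² ∈ k⁺`, `α ∉ k⁺`, of a totally real
subfield `k⁺`. -/
def IsCM (K : Subfield (AlgebraicClosure ℚ)) : Prop :=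
  FiniteDimensional ℚ K ∧
  (∀ φ : K →+* ℂ, ∃ x : K, (φ x).im ≠ 0) ∧
  ∃ (kp : Subfield (AlgebraicClosure ℚ)) (α : AlgebraicClosure ℚ),
    kp ≤ K ∧ (∀ x ∈ kp, ∀ σ : AlgebraicClosure ℚ →+* ℂ, (σ x).im = 0) ∧
    α ∈ K ∧ α ∉ kp ∧ α ^ 2 ∈ kp ∧ K = kp ⊔ Subfield.closure {α}


open Complex in
lemma aux_im_zero {z : ℂ} (h : (z^2).im = 0) (h2 : 0 < (z^2).re) : z.im = 0 := by
  have him : 2 * z.re * z.im = 0 := by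
    have h' := h; simp [pow_two, Complex.mul_im] at h'; linarith
  have hre : z.re^2 - z.im^2 = (z^2).re := by
    simp only [pow_two, Complex.mul_re]
  rcases mul_eq_zero.1 him with h0 | h0
  · rcases mul_eq_zero.1 h0 with h0 | h0
    · norm_num at h0
    · nlinarith
  · exact h0

lemma aux_im_ne_zero {z : ℂ} (h2 : (z^2).re < 0) : z.im ≠ 0 := by
  intro h0
  have : (z^2).re = z.re^2 - z.im^2 := by simp only [pow_two, Complex.mul_re]
  nlinarith

/-- elements of `k ⊔ closure {α}` with `α² ∈ k` have the form `a + b*α`. -/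
lemma aux_quad {F : Type*} [Field F] (k : Subfield F) (α : F) (hα2 : α^2 ∈ k) (hα : α ∉ k) :
    ∀ x ∈ k ⊔ Subfield.closure {α}, ∃ a ∈ k, ∃ b ∈ k, x = a + b * α := by
  set T : Subfield F :=
    { carrier := {x | ∃ a ∈ k, ∃ b ∈ k, x = a + b * α}
      one_mem' := ⟨1, k.one_mem, 0, k.zero_mem, by ring⟩
      zero_mem' := ⟨0, k.zero_mem, 0, k.zero_mem, by ring⟩
      add_mem' := by
        rintro x y ⟨a, ha, b, hb, rfl⟩ ⟨c, hc, e, he, rfl⟩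
        exact ⟨a + c, k.add_mem ha hc, b + e, k.add_mem hb he, by ring⟩
      neg_mem' := by
        rintro x ⟨a, ha, b, hb, rfl⟩
        exact ⟨-a, k.neg_mem ha, -b, k.neg_mem hb, by ring⟩
      mul_mem' := by
        rintro x y ⟨a, ha, b, hb, rfl⟩ ⟨c, hc, e, he, rfl⟩
        refine ⟨a*c + b*e*α^2, k.add_mem (k.mul_mem ha hc) (k.mul_mem (k.mul_mem hb he) hα2),
          a*e + b*c, k.add_mem (k.mul_mem ha he) (k.mul_mem hb hc), by ring⟩
      inv_mem' := by
        rintro x ⟨a, ha, b, hb, rfl⟩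
        by_cases hx : a + b * α = 0
        · exact ⟨0, k.zero_mem, 0, k.zero_mem, by simp [hx]⟩
        have hc : a^2 - b^2*α^2 ≠ 0 := by
          intro hc0
          by_cases hb0 : b = 0
          · subst hb0
            have : a = 0 := by
              have : a^2 = 0 := by linear_combination hc0
              exact pow_eq_zero_iff (n := 2) (by norm_num) |>.1 this
            simp [this] at hx
          · have : (α - a/b) * (α + a/b) = 0 := by
              field_simp
              linear_combination -hc0
            rcases mul_eq_zero.1 this with h1 | h1
            · have : α = a/b := by linear_combination h1
              exact hα (this ▸ k.div_mem ha hb)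
            · have : α = -(a/b) := by linear_combination h1
              exact hα (this ▸ k.neg_mem (k.div_mem ha hb))
        have hk2 : a^2 - b^2*α^2 ∈ k := by
          refine k.sub_mem ?_ ?_
          · rw [pow_two]; exact k.mul_mem ha ha
          · exact k.mul_mem (by rw [pow_two]; exact k.mul_mem hb hb) hα2
        refine ⟨a / (a^2 - b^2*α^2), k.div_mem ha hk2,
          -b / (a^2 - b^2*α^2), k.div_mem (k.neg_mem hb) hk2, ?_⟩
        have key : (a + b*α) * (a/(a^2-b^2*α^2) + -b/(a^2-b^2*α^2)*α) = 1 := by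
          field_simp
          ring
        exact (inv_eq_of_mul_eq_one_right key) }
  intro x hx
  have hT : k ⊔ Subfield.closure {α} ≤ T := by
    refine sup_le ?_ ?_
    · intro y hy; exact ⟨y, hy, 0, k.zero_mem, by ring⟩
    · rw [Subfield.closure_le]
      rintro y rfl
      exact ⟨0, k.zero_mem, 1, k.one_mem, by ring⟩
  exact hT hx

/-- A subfield of `ℚ̄` as an intermediate field over `ℚ`. -/
noncomputable def auxToIF (K : Subfield (AlgebraicClosure ℚ)) :
    IntermediateField ℚ (AlgebraicClosure ℚ) :=
  Subfield.toIntermediateField K (fun q => by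
    have h : (algebraMap ℚ (AlgebraicClosure ℚ)) q = (q : AlgebraicClosure ℚ) :=
      map_ratCast (algebraMap ℚ (AlgebraicClosure ℚ)) q
    rw [h]
    exact SubfieldClass.ratCast_mem K q)

lemma aux_mem_auxToIF (K : Subfield (AlgebraicClosure ℚ)) (x : AlgebraicClosure ℚ) :
    x ∈ auxToIF K ↔ x ∈ K := Iff.rfl

lemma aux_fd (S : Set (AlgebraicClosure ℚ)) (hS : S.Finite) :
    FiniteDimensional ℚ (Subfield.closure S) := by
  haveI : Finite S := hS
  have hint : ∀ x ∈ S, IsIntegral ℚ x := fun x _ =>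
    (AlgebraicClosure.isAlgebraic ℚ).isAlgebraic x |>.isIntegral
  have hfd : FiniteDimensional ℚ (IntermediateField.adjoin ℚ S) :=
    IntermediateField.finiteDimensional_adjoin hint
  have heq : Subfield.closure S = (IntermediateField.adjoin ℚ S).toSubfield := by
    apply le_antisymm
    · rw [Subfield.closure_le]
      intro x hx
      exact IntermediateField.subset_adjoin ℚ S hx
    · intro x hx
      have : IntermediateField.adjoin ℚ S ≤ auxToIF (Subfield.closure S) := by
        rw [IntermediateField.adjoin_le_iff]
        intro y hy
        exact Subfield.subset_closure hy
      exact this hx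
  rw [heq]
  exact Module.Finite.equiv
    (LinearEquiv.ofBijective
      ({ toFun := fun x => ⟨x.1, x.2⟩
         map_add' := fun _ _ => rfl
         map_smul' := fun _ _ => rfl } :
        (IntermediateField.adjoin ℚ S) →ₗ[ℚ] ((IntermediateField.adjoin ℚ S).toSubfield))
      ⟨fun a b h => Subtype.ext (congrArg Subtype.val h), fun x => ⟨⟨x.1, x.2⟩, rfl⟩⟩)

/-- Extend a ring hom from a subfield of `ℚ̄` to all of `ℚ̄`. -/
lemma aux_extend (K : Subfield (AlgebraicClosure ℚ)) (φ : K →+* ℂ) :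
    ∃ σ : AlgebraicClosure ℚ →+* ℂ, ∀ x : K, σ x = φ x := by
  letI : Algebra K ℂ := φ.toAlgebra
  haveI : IsScalarTower ℚ K (AlgebraicClosure ℚ) :=
    IsScalarTower.of_algebraMap_eq' (Subsingleton.elim _ _)
  haveI : Algebra.IsAlgebraic K (AlgebraicClosure ℚ) := by
    constructor
    intro x
    exact ((AlgebraicClosure.isAlgebraic ℚ).isAlgebraic x).tower_top K
  let σ := IsAlgClosed.lift (R := K) (S := AlgebraicClosure ℚ) (M := ℂ)
  exact ⟨σ.toRingHom, fun x => σ.commutes x⟩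

/-- **The union of all CM-fields is `R(√-d)`.**
Let `C ⊆ ℚ̄` be the union of all CM-subfields and `R = maxTotallyReal` the maximal
totally real subfield of `ℚ̄`.  Then for any totally positive `d ∈ R` and any square
root `s` of `-d` in `ℚ̄`, one has `C = R(√-d)`. -/
theorem stmt_19 (d : AlgebraicClosure ℚ) (hdR : d ∈ maxTotallyReal)
    (hdpos : ∀ σ : AlgebraicClosure ℚ →+* ℂ, 0 < (σ d).re)
    (s : AlgebraicClosure ℚ) (hs : s ^ 2 = -d) :
    {x : AlgebraicClosure ℚ | ∃ K : Subfield (AlgebraicClosure ℚ), IsCM K ∧ x ∈ K}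
      = ↑(maxTotallyReal ⊔ Subfield.closure {s}) := by
  have σ₀ : AlgebraicClosure ℚ →+* ℂ := by
    letI : Algebra ℚ (AlgebraicClosure ℚ) := AlgebraicClosure.instAlgebra ℚ
    exact (IsAlgClosed.lift (R := ℚ) (S := AlgebraicClosure ℚ) (M := ℂ)).toRingHom
  have hd0 : d ≠ 0 := by
    intro h
    have := hdpos σ₀
    rw [h] at this
    simp at this
  have hs0 : s ≠ 0 := by
    intro h
    apply hd0
    have h2 : -d = (0 : AlgebraicClosure ℚ) := by rw [← hs, h]; ring
    exact neg_eq_zero.mp h2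
  -- the square of any conjugate of `s` is a negative real
  have hsneg : ∀ σ : AlgebraicClosure ℚ →+* ℂ, ((σ s)^2).re < 0 := by
    intro σ
    have h1 : (σ s)^2 = -(σ d) := by rw [← map_pow, hs, map_neg]
    rw [h1, Complex.neg_re]
    linarith [hdpos σ]
  have hsR : s ∉ maxTotallyReal := fun hmem => aux_im_ne_zero (hsneg σ₀) (hmem σ₀)
  have hs2R : s ^ 2 ∈ maxTotallyReal := hs ▸ maxTotallyReal.neg_mem hdR
  set M := maxTotallyReal ⊔ Subfield.closure {s} with hM
  have hsM : s ∈ M := (le_sup_right : Subfield.closure {s} ≤ M)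
    (Subfield.subset_closure (Set.mem_singleton s))
  have hRM : maxTotallyReal ≤ M := le_sup_left
  ext x
  simp only [Set.mem_setOf_eq, SetLike.mem_coe]
  constructor
  · rintro ⟨K, ⟨hfd, him, kp, α, hkpK, hkpreal, hαK, hαkp, hα2, hKeq⟩, hxK⟩
    have hkpR : kp ≤ maxTotallyReal := fun y hy => hkpreal y hy
    have hα0 : α ≠ 0 := fun h => hαkp (h ▸ kp.zero_mem)
    have hA : ∀ σ : AlgebraicClosure ℚ →+* ℂ, (σ (α^2)).im = 0 := fun σ => hkpreal _ hα2 σ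
    -- the square of any conjugate of α is a negative real
    have hAneg : ∀ σ : AlgebraicClosure ℚ →+* ℂ, (σ (α^2)).re < 0 := by
      intro σ
      by_contra hge
      push_neg at hge
      have hα2ne : σ (α^2) ≠ 0 := (map_ne_zero σ).2 (pow_ne_zero 2 hα0)
      have hrepos : 0 < (σ (α^2)).re := by
        rcases lt_or_eq_of_le hge with h | h
        · exact h
        · exact absurd (Complex.ext h.symm (hA σ)) hα2ne
      have hσα : (σ α).im = 0 := by
        apply aux_im_zero (z := σ α) <;> rw [← map_pow]
        · exact hA σ
        · exact hrepos
      obtain ⟨x₀, hx₀⟩ := him (σ.comp K.subtype)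
      obtain ⟨a, ha, b, hb, hab⟩ := aux_quad kp α hα2 hαkp x₀ (hKeq ▸ x₀.2)
      apply hx₀
      have hφ : (σ.comp K.subtype) x₀ = σ a + σ b * σ α := by
        simp only [RingHom.comp_apply, Subfield.coe_subtype]
        rw [show ((x₀ : AlgebraicClosure ℚ)) = a + b * α from hab]
        simp
      rw [hφ]
      simp [Complex.add_im, Complex.mul_im, hkpreal a ha σ, hkpreal b hb σ, hσα]
    -- α / s is totally real
    have htR : α * s⁻¹ ∈ maxTotallyReal := by
      intro σ
      have key : (σ (α * s⁻¹))^2 = Complex.ofReal ((σ (α^2)).re / -(σ d).re) := by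
        have hsq : (α * s⁻¹)^2 = α^2 * (s^2)⁻¹ := by rw [mul_pow, inv_pow]
        have hA' : σ (α^2) = ((σ (α^2)).re : ℂ) :=
          Complex.ext (Complex.ofReal_re _).symm (by rw [Complex.ofReal_im]; exact hA σ)
        have hD' : σ d = ((σ d).re : ℂ) :=
          Complex.ext (Complex.ofReal_re _).symm (by rw [Complex.ofReal_im]; exact hdR σ)
        rw [← map_pow, hsq, map_mul, map_inv₀, hs, map_neg, hA', hD',
          Complex.ofReal_div, Complex.ofReal_neg, div_eq_mul_inv]
        simp
      apply aux_im_zero (z := σ (α * s⁻¹))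
      · rw [key, Complex.ofReal_im]
      · rw [key, Complex.ofReal_re]
        exact div_pos_of_neg_of_neg (hAneg σ) (by linarith [hdpos σ])
    obtain ⟨a, ha, b, hb, hab⟩ := aux_quad kp α hα2 hαkp x (hKeq ▸ hxK)
    have hαs : α = (α * s⁻¹) * s := by field_simp
    rw [hab, hαs]
    exact M.add_mem (hRM (hkpR ha))
      (M.mul_mem (hRM (hkpR hb)) (M.mul_mem (hRM htR) hsM))
  · intro hxM
    obtain ⟨a, ha, b, hb, hab⟩ := aux_quad maxTotallyReal s hs2R hsR x hxM
    set kp := Subfield.closure {a, b, d} with hkp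
    set K := Subfield.closure {a, b, d, s} with hK
    have hkpR : kp ≤ maxTotallyReal := by
      rw [hkp, Subfield.closure_le]
      rintro y hy
      simp only [Set.mem_insert_iff, Set.mem_singleton_iff] at hy
      rcases hy with rfl | rfl | rfl <;> assumption
    have hsK : s ∈ K := Subfield.subset_closure (by simp)
    have haK : a ∈ K := Subfield.subset_closure (by simp)
    have hbK : b ∈ K := Subfield.subset_closure (by simp)
    have hdkp : d ∈ kp := Subfield.subset_closure (by simp)
    refine ⟨K, ⟨?_, ?_, kp, s, ?_, ?_, hsK, ?_, ?_, ?_⟩, ?_⟩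
    · exact aux_fd _ (((Set.finite_singleton s).insert d |>.insert b |>.insert a))
    · intro φ
      obtain ⟨σ, hσ⟩ := aux_extend K φ
      refine ⟨⟨s, hsK⟩, ?_⟩
      rw [← hσ]
      exact aux_im_ne_zero (hsneg σ)
    · rw [hkp, hK]
      apply Subfield.closure_mono
      intro y hy
      simp only [Set.mem_insert_iff, Set.mem_singleton_iff] at hy ⊢
      tauto
    · exact fun y hy σ => hkpR hy σ
    · exact fun h => hsR (hkpR h)
    · exact hs ▸ kp.neg_mem hdkp
    · rw [hK, hkp, ← Subfield.closure_union]
      congr 1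
      ext y
      simp only [Set.mem_insert_iff, Set.mem_singleton_iff, Set.mem_union]
      tauto
    · rw [hab]
      exact K.add_mem haK (K.mul_mem hbK hsK)
end
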